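/- For any unitary operator U on a Hilbert space H, any unit vector φ, and any continuous function f on the unit circle, ⟨φ, f(U) φ⟩ = lim_{r→1⁻} (1/2π) ∫₀^{2π} (1−r²) ⟨φ, (U − re^{iθ})^{-1}(U^{-1} − re^{-iθ})^{-1} φ⟩ f(e^{iθ}) dθ. -/

import Mathlib

open scoped InnerProductSpace
open Complex ContinuousLinearMap Filter

noncomputable section

namespace PoissonAux

lemma norm_smallc {r : ℝ} (hr0 : 0 ≤ r) (hr1 : r < 1) {w : ℂ} (hw : ‖w‖ = 1) :
    ‖(r : ℂ) * w‖ < 1 := by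
  rw [norm_mul, Complex.norm_real, hw, mul_one, Real.norm_eq_abs, _root_.abs_of_nonneg hr0]
  exact hr1

lemma sub_ne {r : ℝ} (hr0 : 0 ≤ r) (hr1 : r < 1) {l w : ℂ} (hl : ‖l‖ = 1) (hw : ‖w‖ = 1) :
    l - (r : ℂ) * w ≠ 0 := by
  intro h
  rw [sub_eq_zero] at h
  have := norm_smallc hr0 hr1 hw
  rw [← h, hl] at this
  exact lt_irrefl 1 this

lemma one_sub_ne {r : ℝ} (hr0 : 0 ≤ r) (hr1 : r < 1) {w : ℂ} (hw : ‖w‖ = 1) :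
    (1 : ℂ) - (r : ℂ) * w ≠ 0 := by
  have := sub_ne hr0 hr1 (l := 1) (by simp) hw
  simpa using this

lemma slit_aux {r : ℝ} (hr0 : 0 ≤ r) (hr1 : r < 1) {w : ℂ} (hw : ‖w‖ = 1) :
    (1 : ℂ) - (r : ℂ) * w ∈ slitPlane := by
  have : ‖-((r:ℂ) * w)‖ < 1 := by rw [norm_neg]; exact norm_smallc hr0 hr1 hw
  simpa [sub_eq_add_neg] using Complex.mem_slitPlane_of_norm_lt_one this

lemma hasDerivAt_expI (θ : ℝ) : HasDerivAt (fun t : ℝ => exp (↑t * I)) (exp (↑θ * I) * I) θ := by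
  have h : HasDerivAt (fun t : ℝ => (↑t * I : ℂ)) I θ := by
    simpa using (Complex.ofRealCLM.hasDerivAt (x := θ)).mul_const I
  exact h.cexp

lemma cont_e : Continuous fun θ : ℝ => exp (↑θ * I) := by continuity

lemma cont_esq : Continuous fun θ : ℝ => ‖exp (↑θ * I) - _root_.id (fun _ => (0:ℂ)) 0‖ := by continuity

lemma B1 {r : ℝ} (hr0 : 0 ≤ r) (hr1 : r < 1) {l : ℂ} (hl : ‖l‖ = 1) :
    ∫ θ in (0:ℝ)..(2*Real.pi), (l - r * exp (θ * I))⁻¹ = 2 * Real.pi * l⁻¹ := by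
  have hl0 : l ≠ 0 := fun h => by simp [h] at hl
  have key : ∀ θ : ℝ, HasDerivAt
      (fun t : ℝ => l⁻¹ * t + I * l⁻¹ * log (1 - r * l⁻¹ * exp (↑t * I)))
      ((l - r * exp (↑θ * I))⁻¹) θ := by
    intro θ
    have hwl : ‖l⁻¹ * exp (↑θ * I)‖ = 1 := by
      rw [norm_mul, norm_inv, hl, Complex.norm_exp_ofReal_mul_I]; norm_num
    have hne2 : (1 : ℂ) - r * (l⁻¹ * exp (↑θ*I)) ≠ 0 := one_sub_ne hr0 hr1 hwl
    have hne1 : l - (r:ℂ) * exp (↑θ*I) ≠ 0 := sub_ne hr0 hr1 hl (Complex.norm_exp_ofReal_mul_I θ)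
    have hg : HasDerivAt (fun t : ℝ => (1 - ↑r * l⁻¹ * exp (↑t * I) : ℂ))
        (-(↑r * l⁻¹ * (exp (↑θ*I) * I))) θ := ((hasDerivAt_expI θ).const_mul (↑r * l⁻¹)).const_sub 1
    have hmem : (1 - ↑r * l⁻¹ * exp (↑θ*I) : ℂ) ∈ slitPlane := by
      have := slit_aux hr0 hr1 hwl
      rwa [← mul_assoc] at this
    have hlog := (hg.clog_real hmem).const_mul (I * l⁻¹)
    have hlin : HasDerivAt (fun t : ℝ => l⁻¹ * (t : ℂ)) l⁻¹ θ := by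
      simpa using (Complex.ofRealCLM.hasDerivAt (x := θ)).const_mul l⁻¹
    have := hlin.add hlog
    simp only [Pi.add_def] at this
    refine this.congr_deriv ?_
    have e0 : exp (↑θ * I) ≠ 0 := Complex.exp_ne_zero _
    rw [eq_comm]
    field_simp
    ring_nf
    simp only [Complex.I_sq]
    ring
  have hcont : Continuous fun θ : ℝ => (l - ↑r * exp (↑θ * I))⁻¹ := by
    apply Continuous.inv₀
    · continuity
    · intro θ; exact sub_ne hr0 hr1 hl (Complex.norm_exp_ofReal_mul_I θ)
  rw [intervalIntegral.integral_eq_sub_of_hasDerivAt (fun θ _ => key θ)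
    (hcont.intervalIntegrable _ _)]
  have h2pi : (Complex.exp (↑(2 * Real.pi) * I)) = 1 := by
    push_cast; exact Complex.exp_two_pi_mul_I
  simp [h2pi]
  ring

end PoissonAux

namespace PoissonAux
open Complex

lemma B2 {r : ℝ} (hr0 : 0 < r) (hr1 : r < 1) {l : ℂ} (hl : ‖l‖ = 1) :
    ∫ θ in (0:ℝ)..(2*Real.pi), (exp (↑θ * I) - r * l)⁻¹ = 0 := by
  have key : ∀ θ : ℝ, HasDerivAt
      (fun t : ℝ => (-I * l⁻¹ / r) * log (1 - r * l * (exp (↑t * I))⁻¹))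
      ((exp (↑θ * I) - r * l)⁻¹) θ := by
    intro θ
    have e0 : exp (↑θ * I) ≠ 0 := Complex.exp_ne_zero _
    have hwl : ‖l * (exp (↑θ * I))⁻¹‖ = 1 := by
      rw [norm_mul, norm_inv, hl, Complex.norm_exp_ofReal_mul_I]; norm_num
    have hne2 : (1 : ℂ) - ↑r * (l * (exp (↑θ*I))⁻¹) ≠ 0 := one_sub_ne hr0.le hr1 hwl
    have hne1 : exp (↑θ*I) - (r:ℂ) * l ≠ 0 := sub_ne hr0.le hr1 (Complex.norm_exp_ofReal_mul_I θ) hl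
    have hinv : HasDerivAt (fun t : ℝ => (exp (↑t * I))⁻¹)
        (-(I * (exp (↑θ*I))⁻¹)) θ := by
      have h : HasDerivAt (fun t : ℝ => (↑t * I : ℂ)) I θ := by
        simpa using (Complex.ofRealCLM.hasDerivAt (x := θ)).mul_const I
      have := h.neg.cexp
      have heq : (fun t : ℝ => exp (-(↑t * I))) = fun t : ℝ => (exp (↑t * I))⁻¹ := by
        funext t; rw [Complex.exp_neg]
      simp only [Pi.neg_apply] at this
      rw [heq] at this
      convert this using 1
      rw [Complex.exp_neg]; ring
    have hg : HasDerivAt (fun t : ℝ => (1 - ↑r * l * (exp (↑t * I))⁻¹ : ℂ))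
        (-(↑r * l * (-(I * (exp (↑θ*I))⁻¹)))) θ := (hinv.const_mul _).const_sub 1
    have hmem : (1 - ↑r * l * (exp (↑θ*I))⁻¹ : ℂ) ∈ slitPlane := by
      have := slit_aux hr0.le hr1 hwl
      rwa [← mul_assoc] at this
    have := (hg.clog_real hmem).const_mul (-I * l⁻¹ / r)
    refine this.congr_deriv ?_
    have hl0 : l ≠ 0 := fun h => by simp [h] at hl
    have hr0' : (r:ℂ) ≠ 0 := by exact_mod_cast hr0.ne'
    rw [eq_comm]
    field_simp
    ring_nf
    simp only [Complex.I_sq]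
    ring
  have hcont : Continuous fun θ : ℝ => (exp (↑θ * I) - ↑r * l)⁻¹ := by
    apply Continuous.inv₀
    · continuity
    · intro θ; exact sub_ne hr0.le hr1 (Complex.norm_exp_ofReal_mul_I θ) hl
  rw [intervalIntegral.integral_eq_sub_of_hasDerivAt (fun θ _ => key θ)
    (hcont.intervalIntegrable _ _)]
  have h2pi : (Complex.exp (↑(2 * Real.pi) * I)) = 1 := by
    push_cast; exact Complex.exp_two_pi_mul_I
  simp [h2pi]

/-- the complex Poisson kernel -/
def K (r : ℝ) (l : ℂ) (θ : ℝ) : ℂ :=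
  (1 - (r:ℂ)^2) * (l - r * exp (↑θ * I))⁻¹ * (l⁻¹ - r * (exp (↑θ * I))⁻¹)⁻¹

lemma third_ne {r : ℝ} (hr0 : 0 ≤ r) (hr1 : r < 1) {l : ℂ} (hl : ‖l‖ = 1) (θ : ℝ) :
    l⁻¹ - (r:ℂ) * (exp (↑θ * I))⁻¹ ≠ 0 := by
  have h1 : ‖l⁻¹‖ = 1 := by rw [norm_inv, hl]; norm_num
  have h2 : ‖(exp (↑θ * I))⁻¹‖ = 1 := by rw [norm_inv, Complex.norm_exp_ofReal_mul_I]; norm_num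
  exact sub_ne hr0 hr1 h1 h2

lemma contK {r : ℝ} (hr0 : 0 ≤ r) (hr1 : r < 1) {l : ℂ} (hl : ‖l‖ = 1) :
    Continuous fun θ : ℝ => K r l θ := by
  apply Continuous.mul
  apply Continuous.mul continuous_const
  · apply Continuous.inv₀
    · continuity
    · intro θ; exact sub_ne hr0 hr1 hl (Complex.norm_exp_ofReal_mul_I θ)
  · apply Continuous.inv₀
    · apply Continuous.sub continuous_const
      apply Continuous.mul continuous_const
      apply Continuous.inv₀ (by continuity) (fun θ => Complex.exp_ne_zero _)
    · intro θ; exact third_ne hr0 hr1 hl θ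

lemma third_inv {r : ℝ} (hr0 : 0 ≤ r) (hr1 : r < 1) {l : ℂ} (hl : ‖l‖ = 1) (θ : ℝ) :
    (l⁻¹ - (r:ℂ) * (exp (↑θ * I))⁻¹)⁻¹ = exp (↑θ * I) * l * (exp (↑θ * I) - r * l)⁻¹ := by
  have hl0 : l ≠ 0 := fun h => by simp [h] at hl
  have e0 : exp (↑θ * I) ≠ 0 := Complex.exp_ne_zero _
  have hne2 : exp (↑θ*I) - (r:ℂ) * l ≠ 0 := sub_ne hr0 hr1 (Complex.norm_exp_ofReal_mul_I θ) hl
  have h : l⁻¹ - (r:ℂ) * (exp (↑θ * I))⁻¹ = (exp (↑θ * I) - r * l) / (exp (↑θ * I) * l) := by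
    field_simp
  rw [h, inv_div]
  ring

lemma M0 {r : ℝ} (hr0 : 0 < r) (hr1 : r < 1) {l : ℂ} (hl : ‖l‖ = 1) :
    ∫ θ in (0:ℝ)..(2*Real.pi), K r l θ = 2 * Real.pi := by
  have hl0 : l ≠ 0 := fun h => by simp [h] at hl
  have hpt : ∀ θ : ℝ, K r l θ =
      l * (l - r * exp (↑θ * I))⁻¹ + (r * l) * (exp (↑θ * I) - r * l)⁻¹ := by
    intro θ
    have e0 : exp (↑θ * I) ≠ 0 := Complex.exp_ne_zero _
    have hne1 : l - (r:ℂ) * exp (↑θ*I) ≠ 0 := sub_ne hr0.le hr1 hl (Complex.norm_exp_ofReal_mul_I θ)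
    have hne2 : exp (↑θ*I) - (r:ℂ) * l ≠ 0 := sub_ne hr0.le hr1 (Complex.norm_exp_ofReal_mul_I θ) hl
    have hne3 := third_ne hr0.le hr1 hl θ
    rw [K, third_inv hr0.le hr1 hl θ]
    have hne2' := sub_ne hr0.le hr1 (Complex.norm_exp_ofReal_mul_I θ) hl
    field_simp
    ring
  simp_rw [hpt]
  have i1 : IntervalIntegrable (fun θ : ℝ => (l - ↑r * exp (↑θ * I))⁻¹) MeasureTheory.volume 0 (2*Real.pi) := by
    apply Continuous.intervalIntegrable
    exact Continuous.inv₀ (by continuity) (fun θ => sub_ne hr0.le hr1 hl (Complex.norm_exp_ofReal_mul_I θ))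
  have i2 : IntervalIntegrable (fun θ : ℝ => (exp (↑θ * I) - ↑r * l)⁻¹) MeasureTheory.volume 0 (2*Real.pi) := by
    apply Continuous.intervalIntegrable
    exact Continuous.inv₀ (by continuity) (fun θ => sub_ne hr0.le hr1 (Complex.norm_exp_ofReal_mul_I θ) hl)
  rw [intervalIntegral.integral_add (i1.const_mul l) (i2.const_mul (↑r * l)),
    intervalIntegral.integral_const_mul, intervalIntegral.integral_const_mul,
    B1 hr0.le hr1 hl, B2 hr0 hr1 hl]
  field_simp
  simp

end PoissonAux

namespace PoissonAux
open Complex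

lemma i1' {r : ℝ} (hr0 : 0 ≤ r) (hr1 : r < 1) {l : ℂ} (hl : ‖l‖ = 1) :
    IntervalIntegrable (fun θ : ℝ => (l - ↑r * exp (↑θ * I))⁻¹) MeasureTheory.volume 0 (2*Real.pi) :=
  (Continuous.inv₀ (by continuity) fun θ =>
    sub_ne hr0 hr1 hl (Complex.norm_exp_ofReal_mul_I θ)).intervalIntegrable _ _

lemma i2' {r : ℝ} (hr0 : 0 ≤ r) (hr1 : r < 1) {l : ℂ} (hl : ‖l‖ = 1) :
    IntervalIntegrable (fun θ : ℝ => (exp (↑θ * I) - ↑r * l)⁻¹) MeasureTheory.volume 0 (2*Real.pi) :=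
  (Continuous.inv₀ (by continuity) fun θ =>
    sub_ne hr0 hr1 (Complex.norm_exp_ofReal_mul_I θ) hl).intervalIntegrable _ _

lemma M1 {r : ℝ} (hr0 : 0 < r) (hr1 : r < 1) {l : ℂ} (hl : ‖l‖ = 1) :
    ∫ θ in (0:ℝ)..(2*Real.pi), K r l θ * exp (↑θ * I) = 2 * Real.pi * (r * l) := by
  have hl0 : l ≠ 0 := fun h => by simp [h] at hl
  have hr0' : (r:ℂ) ≠ 0 := by exact_mod_cast hr0.ne'
  have hpt : ∀ θ : ℝ, K r l θ * exp (↑θ * I) =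
      (-(1 - (r:ℂ)^2)/r * l) + ((l^2/r) * (l - r * exp (↑θ * I))⁻¹
        + ((r:ℂ)^2*l^2) * (exp (↑θ * I) - r * l)⁻¹) := by
    intro θ
    have e0 : exp (↑θ * I) ≠ 0 := Complex.exp_ne_zero _
    have hne1 : l - (r:ℂ) * exp (↑θ*I) ≠ 0 := sub_ne hr0.le hr1 hl (Complex.norm_exp_ofReal_mul_I θ)
    have hne2 : exp (↑θ*I) - (r:ℂ) * l ≠ 0 := sub_ne hr0.le hr1 (Complex.norm_exp_ofReal_mul_I θ) hl
    rw [K, third_inv hr0.le hr1 hl θ]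
    field_simp
    ring
  simp_rw [hpt]
  rw [intervalIntegral.integral_add intervalIntegrable_const
      (((i1' hr0.le hr1 hl).const_mul _).add ((i2' hr0.le hr1 hl).const_mul _)),
    intervalIntegral.integral_add ((i1' hr0.le hr1 hl).const_mul _) ((i2' hr0.le hr1 hl).const_mul _),
    intervalIntegral.integral_const_mul, intervalIntegral.integral_const_mul,
    intervalIntegral.integral_const_mul,
    B1 hr0.le hr1 hl, B2 hr0 hr1 hl, intervalIntegral.integral_const]
  simp only [Complex.real_smul]
  push_cast
  field_simp
  ring

lemma Mneg1 {r : ℝ} (hr0 : 0 < r) (hr1 : r < 1) {l : ℂ} (hl : ‖l‖ = 1) :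
    ∫ θ in (0:ℝ)..(2*Real.pi), K r l θ * (exp (↑θ * I))⁻¹ = 2 * Real.pi * (r * l⁻¹) := by
  have hl0 : l ≠ 0 := fun h => by simp [h] at hl
  have hpt : ∀ θ : ℝ, K r l θ * (exp (↑θ * I))⁻¹ =
      (r:ℂ) * (l - r * exp (↑θ * I))⁻¹ + (exp (↑θ * I) - r * l)⁻¹ := by
    intro θ
    have e0 : exp (↑θ * I) ≠ 0 := Complex.exp_ne_zero _
    have hne1 : l - (r:ℂ) * exp (↑θ*I) ≠ 0 := sub_ne hr0.le hr1 hl (Complex.norm_exp_ofReal_mul_I θ)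
    have hne2 : exp (↑θ*I) - (r:ℂ) * l ≠ 0 := sub_ne hr0.le hr1 (Complex.norm_exp_ofReal_mul_I θ) hl
    rw [K, third_inv hr0.le hr1 hl θ]
    field_simp
    ring
  simp_rw [hpt]
  rw [intervalIntegral.integral_add ((i1' hr0.le hr1 hl).const_mul _) (i2' hr0.le hr1 hl),
    intervalIntegral.integral_const_mul, B1 hr0.le hr1 hl, B2 hr0 hr1 hl]
  ring

end PoissonAux

namespace PoissonAux
open Complex

/-- the real Poisson kernel -/
def k (r : ℝ) (l : ℂ) (θ : ℝ) : ℝ := (1 - r^2) / ‖l - r * exp (↑θ * I)‖^2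

lemma k_nonneg {r : ℝ} (hr1 : r ≤ 1) (hr0 : -1 ≤ r) (l : ℂ) (θ : ℝ) : 0 ≤ k r l θ :=
  div_nonneg (by nlinarith) (sq_nonneg _)

lemma kernel_real {r : ℝ} (hr0 : 0 ≤ r) (hr1 : r < 1) {l : ℂ} (hl : ‖l‖ = 1) (θ : ℝ) :
    K r l θ = (k r l θ : ℝ) := by
  have habs : ‖l‖ = 1 := hl
  have habs2 : ‖exp (↑θ * I)‖ = 1 := Complex.norm_exp_ofReal_mul_I θ
  have h1 : l⁻¹ = (starRingEnd ℂ) l := Complex.inv_eq_conj habs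
  have h2 : (exp (↑θ * I))⁻¹ = (starRingEnd ℂ) (exp (↑θ * I)) := Complex.inv_eq_conj habs2
  have h3 : l⁻¹ - (r:ℂ) * (exp (↑θ * I))⁻¹ = (starRingEnd ℂ) (l - r * exp (↑θ * I)) := by
    rw [h1, h2, map_sub, map_mul]
    simp
  have hne1 : l - (r:ℂ) * exp (↑θ*I) ≠ 0 := sub_ne hr0 hr1 hl (Complex.norm_exp_ofReal_mul_I θ)
  rw [K, h3, mul_assoc, ← mul_inv, Complex.mul_conj, k]
  rw [Complex.normSq_eq_norm_sq]
  push_cast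
  rw [div_eq_mul_inv]

lemma cont_k {r : ℝ} (hr0 : 0 ≤ r) (hr1 : r < 1) {l : ℂ} (hl : ‖l‖ = 1) :
    Continuous fun θ : ℝ => k r l θ := by
  apply Continuous.div continuous_const
  · continuity
  · intro θ
    have := sub_ne hr0 hr1 hl (Complex.norm_exp_ofReal_mul_I θ)
    exact pow_ne_zero 2 (norm_ne_zero_iff.mpr this)

lemma mR0 {r : ℝ} (hr0 : 0 < r) (hr1 : r < 1) {l : ℂ} (hl : ‖l‖ = 1) :
    ∫ θ in (0:ℝ)..(2*Real.pi), k r l θ = 2 * Real.pi := by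
  have := M0 hr0 hr1 hl
  simp_rw [fun θ => kernel_real hr0.le hr1 hl θ] at this
  rw [intervalIntegral.integral_ofReal] at this
  exact_mod_cast this

lemma mR2 {r : ℝ} (hr0 : 0 < r) (hr1 : r < 1) {l : ℂ} (hl : ‖l‖ = 1) :
    ∫ θ in (0:ℝ)..(2*Real.pi), k r l θ * ‖exp (↑θ * I) - l‖^2 = 4 * Real.pi * (1 - r) := by
  have hl0 : l ≠ 0 := fun h => by simp [h] at hl
  have hpt : ∀ θ : ℝ, ((k r l θ * ‖exp (↑θ * I) - l‖^2 : ℝ) : ℂ) =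
      2 * K r l θ + (-(l⁻¹)) * (K r l θ * exp (↑θ * I)) + (-l) * (K r l θ * (exp (↑θ * I))⁻¹) := by
    intro θ
    have e0 : exp (↑θ * I) ≠ 0 := Complex.exp_ne_zero _
    have habs2 : ‖exp (↑θ * I)‖ = 1 := Complex.norm_exp_ofReal_mul_I θ
    have h2 : (exp (↑θ * I))⁻¹ = (starRingEnd ℂ) (exp (↑θ * I)) := Complex.inv_eq_conj habs2
    have h1 : l⁻¹ = (starRingEnd ℂ) l := Complex.inv_eq_conj hl
    have hsq : ((‖exp (↑θ * I) - l‖ : ℝ) : ℂ)^2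
        = (exp (↑θ * I) - l) * ((exp (↑θ * I))⁻¹ - l⁻¹) := by
      calc ((‖exp (↑θ * I) - l‖ : ℝ) : ℂ)^2
          = ((Complex.normSq (exp (↑θ * I) - l) : ℝ) : ℂ) := by
            rw [Complex.normSq_eq_norm_sq]; push_cast; ring
        _ = (exp (↑θ * I) - l) * (starRingEnd ℂ) (exp (↑θ * I) - l) := (Complex.mul_conj _).symm
        _ = (exp (↑θ * I) - l) * ((exp (↑θ * I))⁻¹ - l⁻¹) := by rw [h1, h2, map_sub]
    push_cast
    rw [← kernel_real hr0.le hr1 hl θ, hsq]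
    have hee : exp (↑θ * I) * (exp (↑θ * I))⁻¹ = 1 := mul_inv_cancel₀ e0
    have hll : l * l⁻¹ = 1 := mul_inv_cancel₀ hl0
    linear_combination (K r l θ) * hee + (K r l θ) * hll
  have cK := contK hr0.le hr1 hl
  have iK : IntervalIntegrable (fun θ : ℝ => K r l θ) MeasureTheory.volume 0 (2*Real.pi) :=
    cK.intervalIntegrable _ _
  have iKe : IntervalIntegrable (fun θ : ℝ => K r l θ * exp (↑θ * I)) MeasureTheory.volume 0 (2*Real.pi) :=
    (cK.mul (by continuity)).intervalIntegrable _ _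
  have iKei : IntervalIntegrable (fun θ : ℝ => K r l θ * (exp (↑θ * I))⁻¹) MeasureTheory.volume 0 (2*Real.pi) :=
    (cK.mul (Continuous.inv₀ (by continuity) (fun θ => Complex.exp_ne_zero _))).intervalIntegrable _ _
  have hC : (∫ θ in (0:ℝ)..(2*Real.pi), (2 * K r l θ + (-(l⁻¹)) * (K r l θ * exp (↑θ * I))
      + (-l) * (K r l θ * (exp (↑θ * I))⁻¹))) = ((4 * Real.pi * (1 - r) : ℝ) : ℂ) := by
    rw [intervalIntegral.integral_add ((iK.const_mul 2).add (iKe.const_mul _)) (iKei.const_mul _),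
      intervalIntegral.integral_add (iK.const_mul 2) (iKe.const_mul _),
      intervalIntegral.integral_const_mul, intervalIntegral.integral_const_mul,
      intervalIntegral.integral_const_mul, M0 hr0 hr1 hl, M1 hr0 hr1 hl, Mneg1 hr0 hr1 hl]
    push_cast
    field_simp
    ring
  simp_rw [← hpt] at hC
  have : ((∫ θ in (0:ℝ)..(2*Real.pi), k r l θ * ‖exp (↑θ * I) - l‖^2 : ℝ) : ℂ)
      = ((4 * Real.pi * (1 - r) : ℝ) : ℂ) := by
    rw [← hC, intervalIntegral.integral_ofReal]
  exact_mod_cast this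

end PoissonAux

namespace PoissonAux
open Complex

lemma key_estimate (f : ℂ → ℂ) (hf : Continuous f) {ε : ℝ} (hε : 0 < ε) :
    ∀ᶠ r in nhdsWithin (1:ℝ) (Set.Iio 1), ∀ l : ℂ, ‖l‖ = 1 →
      ‖(1/(2*(Real.pi:ℂ))) * (∫ θ in (0:ℝ)..(2*Real.pi), K r l θ * f (exp (↑θ * I))) - f l‖
        < ε := by
  obtain ⟨M, hM⟩ := (isCompact_sphere (0:ℂ) 1).exists_bound_of_continuousOn hf.continuousOn
  set M' := max M 0 with hM'def
  have hM' : ∀ x ∈ Metric.sphere (0:ℂ) 1, ‖f x‖ ≤ M' := fun x hx => (hM x hx).trans (le_max_left _ _)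
  have hM'0 : 0 ≤ M' := le_max_right _ _
  obtain ⟨δ, hδ0, hδ⟩ := Metric.uniformContinuousOn_iff.mp
    ((isCompact_sphere (0:ℂ) 1).uniformContinuousOn_of_continuous hf.continuousOn)
    (ε/2) (half_pos hε)
  set C := 2*M'/δ^2 with hCdef
  have hC0 : 0 ≤ C := by positivity
  have hb : ∀ x y : ℂ, ‖x‖ = 1 → ‖y‖ = 1 → ‖f x - f y‖ ≤ ε/2 + C * ‖x - y‖^2 := by
    intro x y hx hy
    have hxs : x ∈ Metric.sphere (0:ℂ) 1 := by simpa [mem_sphere_zero_iff_norm] using hx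
    have hys : y ∈ Metric.sphere (0:ℂ) 1 := by simpa [mem_sphere_zero_iff_norm] using hy
    by_cases hd : dist x y < δ
    · have := hδ x hxs y hys hd
      rw [dist_eq_norm] at this
      have h2 : 0 ≤ C * ‖x - y‖^2 := by positivity
      linarith
    · push_neg at hd
      rw [dist_eq_norm] at hd
      have h1 : ‖f x - f y‖ ≤ 2 * M' := by
        calc ‖f x - f y‖ ≤ ‖f x‖ + ‖f y‖ := norm_sub_le _ _
          _ ≤ M' + M' := add_le_add (hM' x hxs) (hM' y hys)
          _ = 2 * M' := by ring
      have h2 : δ^2 ≤ ‖x - y‖^2 := by nlinarith [norm_nonneg (x - y)]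
      have h3 : 2 * M' ≤ C * ‖x - y‖^2 := by
        rw [hCdef]
        rw [div_mul_eq_mul_div, le_div_iff₀ (by positivity)]
        nlinarith
      linarith
  set η := ε/(4*(C+1)) with hηdef
  have hη0 : 0 < η := by positivity
  have hmem : Set.Ioo (max (1/2) (1 - η)) 1 ∈ nhdsWithin (1:ℝ) (Set.Iio 1) := by
    apply Ioo_mem_nhdsLT_of_mem
    constructor
    · apply max_lt (by norm_num) (by linarith)
    · exact le_refl 1
  filter_upwards [hmem] with r hr l hl
  have hr0 : 0 < r := lt_trans (by norm_num) (lt_of_le_of_lt (le_max_left _ _) hr.1)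
  have hr1 : r < 1 := hr.2
  have hrη : 1 - r < η := by
    have := lt_of_le_of_lt (le_max_right (1/2) (1 - η)) hr.1
    linarith
  have hπ : (0:ℝ) < Real.pi := Real.pi_pos
  have hπne : ((2:ℂ) * Real.pi) ≠ 0 := by
    simp only [ne_eq, mul_eq_zero, not_or]
    constructor
    · norm_num
    · exact_mod_cast hπ.ne'
  have cK := contK hr0.le hr1 hl
  have ck := cont_k hr0.le hr1 hl
  have cfe : Continuous fun θ : ℝ => f (exp (↑θ * I)) := hf.comp cont_e
  have hint1 : IntervalIntegrable (fun θ : ℝ => K r l θ * f (exp (↑θ * I)))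
      MeasureTheory.volume 0 (2*Real.pi) := (cK.mul cfe).intervalIntegrable _ _
  have hint2 : IntervalIntegrable (fun θ : ℝ => K r l θ * f l)
      MeasureTheory.volume 0 (2*Real.pi) := (cK.mul continuous_const).intervalIntegrable _ _
  have hsub : (1/(2*(Real.pi:ℂ))) * (∫ θ in (0:ℝ)..(2*Real.pi), K r l θ * f (exp (↑θ * I))) - f l
      = (1/(2*(Real.pi:ℂ))) * ∫ θ in (0:ℝ)..(2*Real.pi),
          K r l θ * (f (exp (↑θ * I)) - f l) := by
    have h : (∫ θ in (0:ℝ)..(2*Real.pi), K r l θ * (f (exp (↑θ * I)) - f l))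
        = (∫ θ in (0:ℝ)..(2*Real.pi), K r l θ * f (exp (↑θ * I))) - (2*(Real.pi:ℂ)) * f l := by
      simp_rw [mul_sub]
      rw [intervalIntegral.integral_sub hint1 hint2, intervalIntegral.integral_mul_const,
        M0 hr0 hr1 hl]
    rw [h]
    rw [mul_sub, ← mul_assoc, one_div, inv_mul_cancel₀ hπne, one_mul]
  rw [hsub]
  have hcoef : ‖(1/(2*(Real.pi:ℂ)))‖ = 1/(2*Real.pi) := by
    rw [norm_div, norm_one, norm_mul]
    norm_num [Complex.norm_real, abs_of_pos hπ]
  have hbound1 : ‖∫ θ in (0:ℝ)..(2*Real.pi), K r l θ * (f (exp (↑θ * I)) - f l)‖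
      ≤ ∫ θ in (0:ℝ)..(2*Real.pi), k r l θ * ‖f (exp (↑θ * I)) - f l‖ := by
    have h := intervalIntegral.norm_integral_le_integral_norm
      (f := fun θ : ℝ => K r l θ * (f (exp (↑θ * I)) - f l)) (μ := MeasureTheory.volume)
      (a := 0) (b := 2*Real.pi) (by positivity)
    refine h.trans (le_of_eq ?_)
    apply intervalIntegral.integral_congr
    intro θ _
    simp only
    rw [norm_mul, kernel_real hr0.le hr1 hl θ, Complex.norm_real, Real.norm_eq_abs,
      _root_.abs_of_nonneg (k_nonneg hr1.le (by linarith) l θ)]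
  have hbound2 : (∫ θ in (0:ℝ)..(2*Real.pi), k r l θ * ‖f (exp (↑θ * I)) - f l‖)
      ≤ ∫ θ in (0:ℝ)..(2*Real.pi), k r l θ * (ε/2 + C * ‖exp (↑θ * I) - l‖^2) := by
    apply intervalIntegral.integral_mono_on (by positivity)
    · exact (ck.mul ((cfe.sub continuous_const).norm)).intervalIntegrable _ _
    · exact (ck.mul (continuous_const.add (continuous_const.mul
        ((cont_e.sub continuous_const).norm.pow 2)))).intervalIntegrable _ _
    · intro θ _
      exact mul_le_mul_of_nonneg_left
        (hb _ _ (Complex.norm_exp_ofReal_mul_I θ) hl) (k_nonneg hr1.le (by linarith) l θ)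
  have hval : (∫ θ in (0:ℝ)..(2*Real.pi), k r l θ * (ε/2 + C * ‖exp (↑θ * I) - l‖^2))
      = 2*Real.pi*(ε/2) + C * (4*Real.pi*(1-r)) := by
    simp_rw [mul_add]
    have ik : IntervalIntegrable (fun θ : ℝ => k r l θ * (ε/2)) MeasureTheory.volume 0 (2*Real.pi) :=
      (ck.mul continuous_const).intervalIntegrable _ _
    have ik2 : IntervalIntegrable (fun θ : ℝ => k r l θ * (C * ‖exp (↑θ * I) - l‖^2))
        MeasureTheory.volume 0 (2*Real.pi) :=
      (ck.mul (continuous_const.mul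
        ((cont_e.sub continuous_const).norm.pow 2))).intervalIntegrable _ _
    rw [intervalIntegral.integral_add ik ik2, intervalIntegral.integral_mul_const, mR0 hr0 hr1 hl]
    congr 1
    have : ∀ θ : ℝ, k r l θ * (C * ‖exp (↑θ * I) - l‖^2) = C * (k r l θ * ‖exp (↑θ * I) - l‖^2) := by
      intro θ; ring
    simp_rw [this]
    rw [intervalIntegral.integral_const_mul, mR2 hr0 hr1 hl]
  calc ‖(1/(2*(Real.pi:ℂ))) * ∫ θ in (0:ℝ)..(2*Real.pi), K r l θ * (f (exp (↑θ * I)) - f l)‖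
      = (1/(2*Real.pi)) * ‖∫ θ in (0:ℝ)..(2*Real.pi), K r l θ * (f (exp (↑θ * I)) - f l)‖ := by
        rw [norm_mul, hcoef]
    _ ≤ (1/(2*Real.pi)) * (2*Real.pi*(ε/2) + C * (4*Real.pi*(1-r))) := by
        apply mul_le_mul_of_nonneg_left _ (by positivity)
        rw [← hval]
        exact hbound1.trans hbound2
    _ = ε/2 + 2*C*(1-r) := by field_simp; ring
    _ < ε := by
        have h1 : C * (1 - r) ≤ C * η := mul_le_mul_of_nonneg_left hrη.le hC0
        have h2 : η * (4*(C+1)) = ε := by rw [hηdef]; field_simp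
        nlinarith

end PoissonAux

namespace PoissonAux
open scoped InnerProductSpace
open ContinuousLinearMap

variable {H : Type*} [NormedAddCommGroup H] [InnerProductSpace ℂ H] [CompleteSpace H]

lemma spectrum_norm_one {U : H →L[ℂ] H} (hU : U ∈ unitary (H →L[ℂ] H)) :
    ∀ l ∈ spectrum ℂ U, ‖l‖ = 1 := by
  intro l hl
  have := spectrum.subset_circle_of_unitary hU hl
  simpa using mem_sphere_zero_iff_norm.mp this

lemma spectrum_ne_zero {U : H →L[ℂ] H} (hU : U ∈ unitary (H →L[ℂ] H)) :
    ∀ l ∈ spectrum ℂ U, l ≠ 0 := by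
  intro l hl h
  have := spectrum_norm_one hU l hl
  rw [h] at this
  norm_num at this

lemma integrand_eq {U : H →L[ℂ] H} (hU : U ∈ unitary (H →L[ℂ] H)) (φ : H)
    (f : ℂ → ℂ) {r : ℝ} (hr0 : 0 < r) (hr1 : r < 1) (θ : ℝ) :
    (1 - (r : ℂ) ^ 2) *
        ⟪φ, ((Ring.inverse (U - ((r : ℂ) * Complex.exp ((θ:ℂ) * I)) • 1)
          ∘L Ring.inverse ((Ring.inverse U) - ((r : ℂ) * Complex.exp (-(θ:ℂ) * I)) • 1))) φ⟫_ℂ *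
        f (Complex.exp ((θ:ℂ) * I))
      = ⟪φ, (cfc (fun l : ℂ => K r l θ * f (Complex.exp ((θ:ℂ) * I))) U) φ⟫_ℂ := by
  have hN : IsStarNormal U := isStarNormal_of_mem_unitary hU
  have hone := spectrum_norm_one hU
  have h0 := spectrum_ne_zero hU
  set c : ℂ := (r:ℂ) * Complex.exp ((θ:ℂ) * I) with hcdef
  set c' : ℂ := (r:ℂ) * Complex.exp (-(θ:ℂ) * I) with hc'def
  have hc' : c' = (r:ℂ) * (Complex.exp ((θ:ℂ) * I))⁻¹ := by
    rw [hc'def, neg_mul, Complex.exp_neg]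
  have hC1 : ContinuousOn (fun l : ℂ => l - c) (spectrum ℂ U) :=
    continuousOn_id.sub continuousOn_const
  have hinv : ContinuousOn (fun l : ℂ => l⁻¹) (spectrum ℂ U) := continuousOn_id.inv₀ h0
  have hne1 : ∀ l ∈ spectrum ℂ U, l - c ≠ 0 := fun l hl =>
    sub_ne hr0.le hr1 (hone l hl) (Complex.norm_exp_ofReal_mul_I θ)
  have hne2 : ∀ l ∈ spectrum ℂ U, l⁻¹ - c' ≠ 0 := fun l hl => by
    rw [hc']; exact third_ne hr0.le hr1 (hone l hl) θ
  have e1 : Ring.inverse (U - c • 1) = cfc (fun l : ℂ => (l - c)⁻¹) U := by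
    have h1 : cfc (fun l : ℂ => l - c) U = U - c • 1 := by
      rw [cfc_sub (fun l : ℂ => l) (fun _ : ℂ => c) U, cfc_id' ℂ U, cfc_const c U,
        Algebra.algebraMap_eq_smul_one]
    rw [← h1]
    exact (cfc_inv (f := fun l : ℂ => l - c) (a := U) hne1 hC1 hN).symm
  have e2 : Ring.inverse U = cfc (fun l : ℂ => l⁻¹) U := by
    conv_lhs => rw [← cfc_id' ℂ U]
    exact (cfc_inv (f := fun l : ℂ => l) (a := U) h0 continuousOn_id hN).symm
  have e3 : Ring.inverse (Ring.inverse U - c' • 1) = cfc (fun l : ℂ => (l⁻¹ - c')⁻¹) U := by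
    have h2 : cfc (fun l : ℂ => l⁻¹ - c') U = Ring.inverse U - c' • 1 := by
      rw [cfc_sub (fun l : ℂ => l⁻¹) (fun _ : ℂ => c') U hinv continuousOn_const,
        cfc_const c' U, Algebra.algebraMap_eq_smul_one, ← e2]
    rw [← h2]
    exact (cfc_inv (f := fun l : ℂ => l⁻¹ - c') (a := U) hne2 (hinv.sub continuousOn_const) hN).symm
  rw [e1, e3, ← ContinuousLinearMap.mul_def,
    ← cfc_mul (fun l : ℂ => (l - c)⁻¹) (fun l : ℂ => (l⁻¹ - c')⁻¹) U
      (hC1.inv₀ hne1) ((hinv.sub continuousOn_const).inv₀ hne2)]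
  have hfun : (fun l : ℂ => K r l θ * f (Complex.exp ((θ:ℂ) * I)))
      = fun l : ℂ => ((1 - (r:ℂ)^2) * f (Complex.exp ((θ:ℂ) * I))) *
          ((l - c)⁻¹ * (l⁻¹ - c')⁻¹) := by
    funext l
    rw [K, hc']
    ring
  rw [hfun, cfc_const_mul ((1 - (r:ℂ)^2) * f (Complex.exp ((θ:ℂ) * I)))
    (fun l : ℂ => (l - c)⁻¹ * (l⁻¹ - c')⁻¹) U
    ((hC1.inv₀ hne1).mul ((hinv.sub continuousOn_const).inv₀ hne2))]
  rw [ContinuousLinearMap.smul_apply, inner_smul_right]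
  ring

end PoissonAux

namespace PoissonAux
open scoped InnerProductSpace
open ContinuousLinearMap Filter

variable {H : Type*} [NormedAddCommGroup H] [InnerProductSpace ℂ H] [CompleteSpace H]

/-- The Poisson kernel against `f`, as a jointly continuous map on `ℝ × spectrum`. -/
def Wc (U : H →L[ℂ] H) (hone : ∀ l ∈ spectrum ℂ U, ‖l‖ = 1) (f : ℂ → ℂ) (hf : Continuous f)
    {r : ℝ} (hr0 : 0 < r) (hr1 : r < 1) : C(ℝ × spectrum ℂ U, ℂ) where
  toFun p := K r p.2 p.1 * f (Complex.exp ((p.1:ℂ) * I))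
  continuous_toFun := by
    have h0 : ∀ l ∈ spectrum ℂ U, l ≠ 0 := by
      intro l hl h
      have := hone l hl
      rw [h] at this; norm_num at this
    have hc2 : Continuous fun p : ℝ × spectrum ℂ U => ((p.2 : ℂ)) :=
      continuous_subtype_val.comp continuous_snd
    have hce : Continuous fun p : ℝ × spectrum ℂ U => Complex.exp ((p.1:ℂ) * I) :=
      cont_e.comp continuous_fst
    apply Continuous.mul
    · apply Continuous.mul
      apply Continuous.mul continuous_const
      · apply Continuous.inv₀ (hc2.sub (continuous_const.mul hce))
        intro p
        exact sub_ne hr0.le hr1 (hone p.2 p.2.2) (Complex.norm_exp_ofReal_mul_I p.1)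
      · apply Continuous.inv₀
          ((hc2.inv₀ fun p => h0 p.2 p.2.2).sub
            (continuous_const.mul (hce.inv₀ fun p => Complex.exp_ne_zero _)))
        intro p
        exact third_ne hr0.le hr1 (hone p.2 p.2.2) p.1
    · exact hf.comp hce

/-- The smoothed functions, with junk value `f` itself outside `(0,1)`. -/
noncomputable def Pmap (U : H →L[ℂ] H) (hone : ∀ l ∈ spectrum ℂ U, ‖l‖ = 1)
    [CompactSpace (spectrum ℂ U)] (f : ℂ → ℂ) (hf : Continuous f) (r : ℝ) :
    C(spectrum ℂ U, ℂ) :=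
  if h : 0 < r ∧ r < 1 then
    (1/(2*(Real.pi:ℂ))) • ∫ θ in (0:ℝ)..(2*Real.pi),
      (ContinuousMap.curry (Wc U hone f hf h.1 h.2)) θ
  else ⟨fun l => f l, hf.comp continuous_subtype_val⟩

lemma Pmap_apply (U : H →L[ℂ] H) (hone : ∀ l ∈ spectrum ℂ U, ‖l‖ = 1)
    [CompactSpace (spectrum ℂ U)] (f : ℂ → ℂ) (hf : Continuous f) {r : ℝ}
    (hr0 : 0 < r) (hr1 : r < 1) (l : spectrum ℂ U) :
    Pmap U hone f hf r l
      = (1/(2*(Real.pi:ℂ))) * ∫ θ in (0:ℝ)..(2*Real.pi),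
          K r l θ * f (Complex.exp ((θ:ℂ) * I)) := by
  rw [Pmap, dif_pos ⟨hr0, hr1⟩]
  have hInt : IntervalIntegrable (fun θ : ℝ => (ContinuousMap.curry (Wc U hone f hf hr0 hr1)) θ)
      MeasureTheory.volume 0 (2*Real.pi) :=
    ((ContinuousMap.curry (Wc U hone f hf hr0 hr1)).continuous).intervalIntegrable _ _
  have h := (ContinuousMap.evalCLM (R := ℂ) l).intervalIntegral_comp_comm hInt
  rw [ContinuousMap.smul_apply]
  have : (∫ θ in (0:ℝ)..(2*Real.pi), (ContinuousMap.curry (Wc U hone f hf hr0 hr1)) θ) l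
      = ∫ θ in (0:ℝ)..(2*Real.pi), K r l θ * f (Complex.exp ((θ:ℂ) * I)) := by
    have h2 : (∫ θ in (0:ℝ)..(2*Real.pi), (ContinuousMap.curry (Wc U hone f hf hr0 hr1)) θ) l
        = (ContinuousMap.evalCLM (R := ℂ) l)
            (∫ θ in (0:ℝ)..(2*Real.pi), (ContinuousMap.curry (Wc U hone f hf hr0 hr1)) θ) := rfl
    rw [h2, ← h]
    rfl
  rw [this, smul_eq_mul]

lemma Pmap_tendsto (U : H →L[ℂ] H) (hone : ∀ l ∈ spectrum ℂ U, ‖l‖ = 1)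
    [CompactSpace (spectrum ℂ U)] (f : ℂ → ℂ) (hf : Continuous f) :
    Tendsto (Pmap U hone f hf) (nhdsWithin (1:ℝ) (Set.Iio 1))
      (nhds ⟨fun l => f l, hf.comp continuous_subtype_val⟩) := by
  rw [Metric.tendsto_nhds]
  intro ε hε
  filter_upwards [key_estimate f hf hε,
    Ioo_mem_nhdsLT_of_mem (a := (0:ℝ)) (b := (1:ℝ)) (c := (1:ℝ)) ⟨by norm_num, le_refl 1⟩]
    with r hkey hr
  rw [dist_eq_norm, ContinuousMap.norm_lt_iff _ hε]
  intro l
  rw [ContinuousMap.sub_apply, Pmap_apply U hone f hf hr.1 hr.2]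
  exact hkey l (hone l l.2)

end PoissonAux

namespace PoissonAux
open Complex

lemma contKl {r : ℝ} (hr0 : 0 ≤ r) (hr1 : r < 1) (θ : ℝ) {s : Set ℂ} (hs : ∀ l ∈ s, ‖l‖ = 1) :
    ContinuousOn (fun l : ℂ => K r l θ) s := by
  have h0 : ∀ l ∈ s, l ≠ 0 := fun l hl h => by
    have := hs l hl; rw [h] at this; norm_num at this
  apply ContinuousOn.mul
  apply ContinuousOn.mul continuousOn_const
  · exact (continuousOn_id.sub continuousOn_const).inv₀ fun l hl =>
      sub_ne hr0 hr1 (hs l hl) (Complex.norm_exp_ofReal_mul_I θ)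
  · exact ((continuousOn_id.inv₀ h0).sub continuousOn_const).inv₀ fun l hl =>
      third_ne hr0 hr1 (hs l hl) θ

end PoissonAux


/-- Poisson representation of the continuous functional calculus of a unitary operator:
`⟨φ, f(U) φ⟩ = lim_{r→1⁻} (1/2π) ∫₀^{2π} (1-r²) ⟨φ, (U-re^{iθ})⁻¹(U⁻¹-re^{-iθ})⁻¹ φ⟩ f(e^{iθ}) dθ`. -/
theorem stmt11 {H : Type*} [NormedAddCommGroup H] [InnerProductSpace ℂ H] [CompleteSpace H]
    [Nontrivial H]
    (U : H →L[ℂ] H) (hU : U ∈ unitary (H →L[ℂ] H)) (φ : H) (hφ : ‖φ‖ = 1)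
    (f : ℂ → ℂ) (hf : Continuous f) :
    Tendsto
      (fun r : ℝ => (1 / (2 * Real.pi) : ℂ) *
        ∫ θ in (0:ℝ)..(2 * Real.pi),
          (1 - (r : ℂ) ^ 2) *
            ⟪φ, ((Ring.inverse (U - ((r : ℂ) * Complex.exp ((θ : ℂ) * Complex.I)) • 1)
              ∘L Ring.inverse ((Ring.inverse U) -
                ((r : ℂ) * Complex.exp (-(θ : ℂ) * Complex.I)) • 1))) φ⟫_ℂ *
            f (Complex.exp ((θ : ℂ) * Complex.I)))
      (nhdsWithin (1 : ℝ) (Set.Iio 1))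
      (nhds ⟪φ, (cfc f U) φ⟫_ℂ) := by
  have hN : IsStarNormal U := isStarNormal_of_mem_unitary hU
  haveI : CompactSpace (spectrum ℂ U) := by
    rw [← isCompact_iff_compactSpace]; exact spectrum.isCompact U
  have hone := PoissonAux.spectrum_norm_one hU
  let Φ : C(spectrum ℂ U, ℂ) →L[ℂ] ℂ :=
    (innerSL ℂ φ).comp ((ContinuousLinearMap.apply ℂ H φ).comp (cfcL hN (R := ℂ)))
  have hΦ : ∀ g : C(spectrum ℂ U, ℂ), Φ g = ⟪φ, cfcHom hN (R := ℂ) g φ⟫_ℂ := fun g => rfl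
  have htarget : ⟪φ, (cfc f U) φ⟫_ℂ
      = Φ ⟨fun l => f l, hf.comp continuous_subtype_val⟩ := by
    rw [cfc_apply f U hN hf.continuousOn, hΦ]
    rfl
  rw [htarget]
  have htend := (Φ.continuous.tendsto _).comp (PoissonAux.Pmap_tendsto U hone f hf)
  apply Filter.Tendsto.congr' _ htend
  filter_upwards [Ioo_mem_nhdsLT_of_mem (a := (0:ℝ)) (b := (1:ℝ)) (c := (1:ℝ))
    ⟨by norm_num, le_refl 1⟩] with r hr
  have hr0 : 0 < r := hr.1
  have hr1 : r < 1 := hr.2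
  show Φ (PoissonAux.Pmap U hone f hf r) = _
  rw [PoissonAux.Pmap, dif_pos ⟨hr0, hr1⟩, map_smul, smul_eq_mul]
  have hInt : IntervalIntegrable
      (fun θ : ℝ => (ContinuousMap.curry (PoissonAux.Wc U hone f hf hr0 hr1)) θ)
      MeasureTheory.volume 0 (2*Real.pi) :=
    ((ContinuousMap.curry (PoissonAux.Wc U hone f hf hr0 hr1)).continuous).intervalIntegrable _ _
  rw [← Φ.intervalIntegral_comp_comm hInt]
  congr 1
  apply intervalIntegral.integral_congr
  intro θ _
  have hcfceq : cfc (fun l : ℂ => PoissonAux.K r l θ * f (Complex.exp ((θ:ℂ) * Complex.I))) U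
      = cfcHom hN (R := ℂ) ((ContinuousMap.curry (PoissonAux.Wc U hone f hf hr0 hr1)) θ) := by
    rw [cfc_apply (fun l : ℂ => PoissonAux.K r l θ * f (Complex.exp ((θ:ℂ) * Complex.I))) U hN ((PoissonAux.contKl hr0.le hr1 θ hone).mul continuousOn_const)]
    congr 1
  show Φ ((ContinuousMap.curry (PoissonAux.Wc U hone f hf hr0 hr1)) θ) = _
  rw [hΦ, ← hcfceq, ← PoissonAux.integrand_eq hU φ f hr0 hr1 θ]
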